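/- For N ≡ 1 (mod 4), the linear map Ξ_N defined by Ξ_N(σ) = (⟨I^{⊗N}, σ⟩ I + ⟨X^{⊗N}, σ⟩ X + ⟨Y^{⊗N}, σ⟩ Y + ⟨Z^{⊗N}, σ⟩ Z)/2 is completely positive. -/

import Mathlib

open Matrix Complex ComplexOrder

noncomputable section

/-- Single-qubit Pauli matrices. -/
def pI : Matrix (Fin 2) (Fin 2) ℂ := 1
def pX : Matrix (Fin 2) (Fin 2) ℂ := !![0, 1; 1, 0]
def pY : Matrix (Fin 2) (Fin 2) ℂ := !![0, -Complex.I; Complex.I, 0]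
def pZ : Matrix (Fin 2) (Fin 2) ℂ := !![1, 0; 0, -1]

/-- `N`-fold tensor power of a single-qubit matrix. -/
def tpow (M : Matrix (Fin 2) (Fin 2) ℂ) (N : ℕ) :
    Matrix (Fin N → Fin 2) (Fin N → Fin 2) ℂ :=
  Matrix.of fun x y => ∏ i, M (x i) (y i)

/-- Hilbert–Schmidt inner product `⟨A,B⟩ = tr(A* B)`. -/
def hsInner {n : Type*} [Fintype n] (A B : Matrix n n ℂ) : ℂ := (Aᴴ * B).trace

/-- The map `Ξ_N`. -/
def Xi (N : ℕ) (σ : Matrix (Fin N → Fin 2) (Fin N → Fin 2) ℂ) :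
    Matrix (Fin 2) (Fin 2) ℂ :=
  (1/2 : ℂ) • (hsInner (tpow pI N) σ • pI + hsInner (tpow pX N) σ • pX
    + hsInner (tpow pY N) σ • pY + hsInner (tpow pZ N) σ • pZ)

namespace XiCP
variable {N : ℕ}
def flipv (x : Fin N → Fin 2) : Fin N → Fin 2 := fun i => x i + 1
lemma flipv_flipv (x : Fin N → Fin 2) : flipv (flipv x) = x := by
  funext i; have : ∀ a : Fin 2, a + 1 + 1 = a := by decide
  simp [flipv, this]
lemma flipv_ne (hN : 0 < N) (x : Fin N → Fin 2) : flipv x ≠ x := by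
  intro h
  have := congrFun h ⟨0, hN⟩
  have h2 : ∀ a : Fin 2, a + 1 ≠ a := by decide
  exact h2 _ this
def par (x : Fin N → Fin 2) : ℕ := (∑ i, (x i).val) % 2
lemma par_lt (x : Fin N → Fin 2) : par x < 2 := Nat.mod_lt _ (by norm_num)
lemma par_flipv (hN2 : N % 2 = 1) (x : Fin N → Fin 2) : par (flipv x) = (par x + 1) % 2 := by
  unfold par flipv
  have h1 : ∀ i, ((x i + 1 : Fin 2)).val = ((x i).val + 1) % 2 := by
    intro i; simp [Fin.val_add]
  simp_rw [h1]
  rw [← Finset.sum_nat_mod, Finset.sum_add_distrib, Finset.sum_const, Finset.card_univ,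
    Fintype.card_fin, smul_eq_mul, mul_one]
  omega
lemma pI_apply (a b : Fin 2) : pI a b = if a = b then 1 else 0 := by
  simp [pI, Matrix.one_apply]
lemma pX_apply (a b : Fin 2) : pX a b = if b = a + 1 then 1 else 0 := by
  fin_cases a <;> fin_cases b <;> simp [pX] <;> decide
lemma pY_apply (a b : Fin 2) : pY a b = if b = a + 1 then Complex.I * (-1)^((a:ℕ)+1) else 0 := by
  fin_cases a <;> fin_cases b <;> simp [pY] <;> norm_num <;> decide
lemma pZ_apply (a b : Fin 2) : pZ a b = if a = b then (-1)^((a:ℕ)) else 0 := by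
  fin_cases a <;> fin_cases b <;> simp [pZ] <;> norm_num <;> decide
lemma neg_one_pow_par (n : ℕ) : ((-1 : ℂ))^n = (-1)^(n % 2) := by
  conv_lhs => rw [← Nat.div_add_mod n 2]
  rw [pow_add, pow_mul]
  norm_num
lemma tpow_pI (x y : Fin N → Fin 2) : tpow pI N x y = if x = y then 1 else 0 := by
  by_cases h : x = y
  · simp [tpow, h, pI_apply]
  · obtain ⟨i, hi⟩ := Function.ne_iff.mp h
    simp only [tpow, Matrix.of_apply, if_neg h]
    exact Finset.prod_eq_zero (Finset.mem_univ i) (by simp [pI_apply, hi])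
lemma tpow_pX (x y : Fin N → Fin 2) : tpow pX N x y = if y = flipv x then 1 else 0 := by
  by_cases h : y = flipv x
  · simp only [tpow, Matrix.of_apply, if_pos h, h]
    exact Finset.prod_eq_one (fun i _ => by simp [pX_apply, flipv])
  · obtain ⟨i, hi⟩ := Function.ne_iff.mp h
    simp only [tpow, Matrix.of_apply, if_neg h]
    exact Finset.prod_eq_zero (Finset.mem_univ i) (by simp [pX_apply]; exact fun hc => absurd hc hi)
lemma tpow_pZ (x y : Fin N → Fin 2) :
    tpow pZ N x y = if x = y then ((-1:ℂ))^(par x) else 0 := by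
  by_cases h : x = y
  · simp only [tpow, Matrix.of_apply, if_pos h, ← h]
    have : ∀ i ∈ Finset.univ, pZ (x i) (x i) = (-1:ℂ)^((x i : ℕ)) := fun i _ => by
      simp [pZ_apply]
    rw [Finset.prod_congr rfl this, Finset.prod_pow_eq_pow_sum, neg_one_pow_par]
    simp [par]
  · obtain ⟨i, hi⟩ := Function.ne_iff.mp h
    simp only [tpow, Matrix.of_apply, if_neg h]
    exact Finset.prod_eq_zero (Finset.mem_univ i) (by simp [pZ_apply, hi])
lemma tpow_pY (x y : Fin N → Fin 2) :
    tpow pY N x y = if y = flipv x then Complex.I^N * (-1:ℂ)^(N + ∑ i, ((x i):ℕ)) else 0 := by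
  by_cases h : y = flipv x
  · simp only [tpow, Matrix.of_apply, if_pos h, h]
    have : ∀ i ∈ Finset.univ, pY ((x i)) (flipv x i) = Complex.I * (-1:ℂ)^(((x i):ℕ)+1) :=
      fun i _ => by simp [pY_apply, flipv]
    rw [Finset.prod_congr rfl this, Finset.prod_mul_distrib, Finset.prod_const,
      Finset.card_univ, Fintype.card_fin, Finset.prod_pow_eq_pow_sum, Finset.sum_add_distrib,
      Finset.sum_const, Finset.card_univ, Fintype.card_fin, smul_eq_mul, mul_one, add_comm]
    simp
  · obtain ⟨i, hi⟩ := Function.ne_iff.mp h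
    simp only [tpow, Matrix.of_apply, if_neg h]
    exact Finset.prod_eq_zero (Finset.mem_univ i)
      (by simp [pY_apply]; exact fun hc => absurd hc hi)

/-- Kraus operators. -/
def B (N : ℕ) (z : Fin N → Fin 2) : Matrix (Fin 2) (Fin N → Fin 2) ℂ :=
  Matrix.of fun a x => if (z = x ∨ z = flipv x) ∧ ((a:ℕ) = par x) then 1 else 0

lemma conj_B (z : Fin N → Fin 2) (a : Fin 2) (x : Fin N → Fin 2) :
    (starRingEnd ℂ) (B N z a x) = B N z a x := by
  simp [B, apply_ite (starRingEnd ℂ)]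

lemma sum_two (x : Fin N → Fin 2) (hne : flipv x ≠ x) (c d : Prop) [Decidable c] [Decidable d] :
    ∑ z : Fin N → Fin 2, (if (z = x ∨ z = flipv x) ∧ c then (1:ℂ) else 0) *
      (if (z = x ∨ z = flipv x) ∧ d then (1:ℂ) else 0) = if c ∧ d then 2 else 0 := by
  have h1 : ∀ z : Fin N → Fin 2, (if (z = x ∨ z = flipv x) ∧ c then (1:ℂ) else 0) *
      (if (z = x ∨ z = flipv x) ∧ d then (1:ℂ) else 0)
      = if c ∧ d then ((if z = x then (1:ℂ) else 0) + (if z = flipv x then 1 else 0)) else 0 := by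
    intro z
    by_cases hc : c <;> by_cases hd : d <;> by_cases hz1 : z = x <;> by_cases hz2 : z = flipv x <;>
      simp_all
  rw [Finset.sum_congr rfl (fun z _ => h1 z)]
  by_cases hcd : c ∧ d
  · simp only [if_pos hcd, Finset.sum_add_distrib, Finset.sum_ite_eq' Finset.univ,
      Finset.mem_univ, if_pos]
    norm_num
  · simp [hcd]

lemma key (hN : N % 4 = 1) (a b : Fin 2) (x y : Fin N → Fin 2) :
    (starRingEnd ℂ) (tpow pI N x y) * pI a b + (starRingEnd ℂ) (tpow pX N x y) * pX a b
      + (starRingEnd ℂ) (tpow pY N x y) * pY a b + (starRingEnd ℂ) (tpow pZ N x y) * pZ a b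
    = ∑ z : Fin N → Fin 2, B N z a x * (starRingEnd ℂ) (B N z b y) := by
  have hN1 : 0 < N := by omega
  have hN2 : N % 2 = 1 := by omega
  have hxx : flipv x ≠ x := flipv_ne hN1 x
  obtain ⟨k, hk⟩ : ∃ k, N = 4*k+1 := ⟨N/4, by omega⟩
  have hIpow : Complex.I ^ N = Complex.I := by
    rw [hk, pow_add, pow_mul, Complex.I_pow_four, one_pow, pow_one, one_mul]
  simp only [conj_B]
  simp only [B, Matrix.of_apply]
  rw [tpow_pI, tpow_pX, tpow_pY, tpow_pZ, hIpow]
  by_cases hxy : x = y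
  · subst hxy
    rw [sum_two x hxx]
    have hnf : ¬ (x = flipv x) := fun h => hxx h.symm
    simp only [if_pos rfl, if_neg hnf, _root_.map_one, map_zero, zero_mul, add_zero, one_mul,
      map_pow, map_neg]
    have hp := par_lt x
    rcases (by omega : par x = 0 ∨ par x = 1) with h | h <;>
      fin_cases a <;> fin_cases b <;>
      simp [pI_apply, pZ_apply, h] <;> norm_num
  · by_cases hyf : y = flipv x
    · subst hyf
      have hor : ∀ z : Fin N → Fin 2,
          ((z = flipv x ∨ z = flipv (flipv x)) ∧ ((b:ℕ) = par (flipv x))) ↔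
          ((z = x ∨ z = flipv x) ∧ ((b:ℕ) = par (flipv x))) := by
        intro z; rw [flipv_flipv, or_comm]
      simp only [if_pos rfl, if_neg hxy, map_zero, zero_mul, zero_add, add_zero,
        _root_.map_one, one_mul]
      rw [Finset.sum_congr rfl (fun z _ =>
        congrArg _ (if_congr (hor z) rfl rfl))]
      rw [sum_two x hxx, par_flipv hN2]
      have hs : (-1:ℂ)^(N + ∑ i, ((x i):ℕ)) = (-1)^((par x + 1) % 2) := by
        rw [neg_one_pow_par]
        congr 1
        have : par x = (∑ i, ((x i):ℕ)) % 2 := rfl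
        omega
      rw [hs]
      have hp := par_lt x
      rcases (by omega : par x = 0 ∨ par x = 1) with h | h <;>
        fin_cases a <;> fin_cases b <;>
        simp [pX_apply, pY_apply, h, _root_.map_mul, Complex.conj_I, map_pow, _root_.map_neg,
          _root_.map_one] <;> norm_num [Complex.I_mul_I] <;> decide
    · simp only [if_neg hxy, if_neg hyf, map_zero, zero_mul, zero_add, add_zero]
      symm
      apply Finset.sum_eq_zero
      intro z _
      rcases Classical.em (z = x ∨ z = flipv x) with h1 | h1
      · have h2 : ¬ (z = y ∨ z = flipv y) := by
          rintro (h2 | h2) <;> rcases h1 with h1 | h1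
          · exact hxy (h1.symm.trans h2)
          · exact hyf (h2.symm.trans h1)
          · have e : x = flipv y := h1.symm.trans h2
            have e2 := congrArg flipv e
            rw [flipv_flipv] at e2
            exact hyf e2.symm
          · have e : flipv x = flipv y := h1.symm.trans h2
            have e2 := congrArg flipv e
            rw [flipv_flipv, flipv_flipv] at e2
            exact hxy e2
        have hz : (if (z = y ∨ z = flipv y) ∧ (b:ℕ) = par y then (1:ℂ) else 0) = 0 :=
          if_neg (fun hc => h2 hc.1)
        rw [hz, mul_zero]
      · have hz : (if (z = x ∨ z = flipv x) ∧ (a:ℕ) = par x then (1:ℂ) else 0) = 0 :=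
          if_neg (fun hc => h1 hc.1)
        rw [hz, zero_mul]

lemma hsInner_eq {n : Type*} [Fintype n] (A τ : Matrix n n ℂ) :
    hsInner A τ = ∑ x, ∑ y, (starRingEnd ℂ) (A x y) * τ x y := by
  unfold hsInner Matrix.trace
  simp only [Matrix.diag, Matrix.mul_apply, Matrix.conjTranspose_apply, starRingEnd_apply]
  rw [Finset.sum_comm]

lemma Xi_apply (hN : N % 4 = 1) (τ : Matrix (Fin N → Fin 2) (Fin N → Fin 2) ℂ) (a b : Fin 2) :
    Xi N τ a b = (1/2 : ℂ) * ∑ z : Fin N → Fin 2, ∑ x, ∑ y,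
      B N z a x * τ x y * (starRingEnd ℂ) (B N z b y) := by
  unfold Xi
  simp only [Matrix.smul_apply, Matrix.add_apply, smul_eq_mul, hsInner_eq]
  congr 1
  have hswap : ∑ z : Fin N → Fin 2, ∑ x, ∑ y, B N z a x * τ x y * (starRingEnd ℂ) (B N z b y)
      = ∑ x, ∑ y, ∑ z, B N z a x * τ x y * (starRingEnd ℂ) (B N z b y) := by
    rw [Finset.sum_comm]
    exact Finset.sum_congr rfl fun x _ => Finset.sum_comm
  rw [hswap]
  simp only [Finset.sum_mul]
  rw [← Finset.sum_add_distrib, ← Finset.sum_add_distrib, ← Finset.sum_add_distrib]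
  apply Finset.sum_congr rfl
  intro x _
  rw [← Finset.sum_add_distrib, ← Finset.sum_add_distrib, ← Finset.sum_add_distrib]
  apply Finset.sum_congr rfl
  intro y _
  calc (starRingEnd ℂ) (tpow pI N x y) * τ x y * pI a b
        + (starRingEnd ℂ) (tpow pX N x y) * τ x y * pX a b
        + (starRingEnd ℂ) (tpow pY N x y) * τ x y * pY a b
        + (starRingEnd ℂ) (tpow pZ N x y) * τ x y * pZ a b
      = ((starRingEnd ℂ) (tpow pI N x y) * pI a b + (starRingEnd ℂ) (tpow pX N x y) * pX a b
        + (starRingEnd ℂ) (tpow pY N x y) * pY a b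
        + (starRingEnd ℂ) (tpow pZ N x y) * pZ a b) * τ x y := by ring
    _ = (∑ z : Fin N → Fin 2, B N z a x * (starRingEnd ℂ) (B N z b y)) * τ x y := by
        rw [key hN]
    _ = ∑ z : Fin N → Fin 2, B N z a x * τ x y * (starRingEnd ℂ) (B N z b y) := by
        rw [Finset.sum_mul]
        exact Finset.sum_congr rfl fun z _ => by ring

lemma posSemidef_real_smul {n : Type*} [Fintype n] {A : Matrix n n ℂ} (hA : A.PosSemidef)
    {r : ℝ} (hr : 0 ≤ r) : (((r : ℂ)) • A).PosSemidef := by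
  constructor
  · unfold Matrix.IsHermitian
    rw [Matrix.conjTranspose_smul, hA.1.eq]
    congr 1
    rw [Complex.star_def, Complex.conj_ofReal]
  · intro v
    have h := mul_nonneg (by exact_mod_cast Complex.zero_le_real.mpr hr : (0:ℂ) ≤ (r:ℂ)) (hA.2 v)
    simpa [Matrix.smul_apply, smul_eq_mul, Finsupp.mul_sum, mul_assoc, mul_left_comm] using h

def Kr (N : ℕ) (L : Type) [DecidableEq L] (z : Fin N → Fin 2) :
    Matrix (Fin 2 × L) ((Fin N → Fin 2) × L) ℂ :=
  Matrix.of fun p q => B N z p.1 q.1 * (if p.2 = q.2 then 1 else 0)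

lemma Kr_mul (L : Type) [Fintype L] [DecidableEq L]
    (σ : Matrix ((Fin N → Fin 2) × L) ((Fin N → Fin 2) × L) ℂ)
    (z : Fin N → Fin 2) (p q : Fin 2 × L) :
    (Kr N L z * σ * (Kr N L z)ᴴ) p q
      = ∑ x, ∑ y, B N z p.1 x * σ (x, p.2) (y, q.2) * (starRingEnd ℂ) (B N z q.1 y) := by
  simp only [Matrix.mul_apply, Matrix.conjTranspose_apply, Kr, Matrix.of_apply,
    Fintype.sum_prod_type, star_mul', star_one, star_zero, starRingEnd_apply]
  simp only [mul_ite, mul_one, mul_zero, ite_mul, zero_mul, apply_ite (star : ℂ → ℂ),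
    star_zero, star_one]
  have h1 : ∀ x : Fin N → Fin 2, (∑ y : L, if q.2 = y then
        (∑ x1 : Fin N → Fin 2, ∑ l : L, if p.2 = l then B N z p.1 x1 * σ (x1, l) (x, y) else 0) *
          star (B N z q.1 x) else 0)
      = (∑ x1 : Fin N → Fin 2, B N z p.1 x1 * σ (x1, p.2) (x, q.2)) * star (B N z q.1 x) := by
    intro x
    rw [Finset.sum_ite_eq Finset.univ q.2, if_pos (Finset.mem_univ _)]
    congr 1
    apply Finset.sum_congr rfl
    intro x1 _
    rw [Finset.sum_ite_eq Finset.univ p.2, if_pos (Finset.mem_univ _)]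
  rw [Finset.sum_congr rfl (fun x _ => h1 x)]
  simp only [Finset.sum_mul]
  rw [Finset.sum_comm]

lemma Xi_amp (hN : N % 4 = 1) (L : Type) [Fintype L] [DecidableEq L]
    (σ : Matrix ((Fin N → Fin 2) × L) ((Fin N → Fin 2) × L) ℂ) :
    (Matrix.of fun p q : Fin 2 × L =>
      Xi N (Matrix.of fun x y => σ (x, p.2) (y, q.2)) p.1 q.1)
      = (((1/2 : ℝ) : ℂ)) • ∑ z : Fin N → Fin 2, Kr N L z * σ * (Kr N L z)ᴴ := by
  ext p q
  rw [Matrix.of_apply, Xi_apply hN, Matrix.smul_apply, Matrix.sum_apply]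
  rw [show (((1/2 : ℝ)) : ℂ) = (1/2 : ℂ) by norm_num, smul_eq_mul]
  congr 1
  apply Finset.sum_congr rfl
  intro z _
  rw [Kr_mul]
  apply Finset.sum_congr rfl
  intro x _
  apply Finset.sum_congr rfl
  intro y _
  rw [Matrix.of_apply]

end XiCP

set_option maxHeartbeats 1000000

/-- for `N ≡ 1 (mod 4)`, the map `Ξ_N` is completely positive:
for every finite-dimensional auxiliary space `L`, the ampliation `Ξ_N ⊗ id_L`
maps positive semidefinite operators to positive semidefinite operators. -/
theorem Xi_completely_positive (N : ℕ) (hN : N % 4 = 1)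
    (L : Type) [Fintype L] [DecidableEq L]
    (σ : Matrix ((Fin N → Fin 2) × L) ((Fin N → Fin 2) × L) ℂ)
    (hσ : σ.PosSemidef) :
    (Matrix.of fun p q : Fin 2 × L =>
      Xi N (Matrix.of fun x y => σ (x, p.2) (y, q.2)) p.1 q.1).PosSemidef := by
  rw [XiCP.Xi_amp hN L σ]
  have hsum : (∑ z : Fin N → Fin 2, XiCP.Kr N L z * σ * (XiCP.Kr N L z)ᴴ).PosSemidef := by
    apply Finset.sum_induction _ _ (fun A B hA hB => hA.add hB) Matrix.PosSemidef.zero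
    exact fun z _ => hσ.mul_mul_conjTranspose_same (XiCP.Kr N L z)
  exact XiCP.posSemidef_real_smul hsum (by norm_num)
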